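/- Let v, w ≥ 2 be natural numbers, let γ > ζ be real numbers, and let f : Fin w → Fin v → EuclideanSpace ℝ (Fin (v−1)) be such that each f i is a regular simplex and for all i ≠ j and all a, b, ⟪f i a, f j b⟫ ∈ {γ, ζ}. Define matrices B i j ∈ Matrix (Fin v) (Fin v) ℝ for i ≠ j by (B i j) a b = 1 if ⟪f i a, f j b⟫ = γ and 0 otherwise. Then there exist real numbers k, λ, μ, ν with μ > ν such that {B i j} is an LSSD(v,k,λ;w) with linking parameters μ, ν; that is, a set of w pairwise linked regular simplices in ℝ^(v−1) gives rise to a μ-heavy linked system of symmetric designs on w fibers. -/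

import Mathlib

open Matrix RealInnerProductSpace

/-- The all-ones `v × v` real matrix. -/
def J (v : ℕ) : Matrix (Fin v) (Fin v) ℝ := Matrix.of fun _ _ => 1

/-- A linked system of symmetric designs `LSSD(v,k,λ;w)` with linking parameters `μ, ν`. -/
def IsLSSD (v w : ℕ) (k lam mu nu : ℝ)
    (B : Fin w → Fin w → Matrix (Fin v) (Fin v) ℝ) : Prop :=
  (∀ i j : Fin w, i ≠ j → ∀ a b : Fin v, B i j a b = 0 ∨ B i j a b = 1) ∧
  (∀ i j : Fin w, i ≠ j → B j i = (B i j)ᵀ) ∧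
  (∀ i j : Fin w, i ≠ j →
    B i j * (B i j)ᵀ = (k - lam) • (1 : Matrix (Fin v) (Fin v) ℝ) + lam • J v ∧
    (B i j)ᵀ * B i j = (k - lam) • (1 : Matrix (Fin v) (Fin v) ℝ) + lam • J v) ∧
  (∀ h i j : Fin w, h ≠ i → h ≠ j → i ≠ j →
    B i h * B h j = nu • J v + (mu - nu) • B i j)

/-- A regular simplex in `ℝ^(v-1)`: a family of `v` unit vectors with pairwise
inner products `-1/(v-1)`. -/
def IsRegularSimplex (v : ℕ) (a : Fin v → EuclideanSpace ℝ (Fin (v - 1))) : Prop :=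
  (∀ i, ‖a i‖ = 1) ∧
  ∀ i j, i ≠ j → ⟪a i, a j⟫ = -1 / ((v : ℝ) - 1)

section Aux

variable {v : ℕ}

lemma simplex_sum_zero (hv : 2 ≤ v) {a : Fin v → EuclideanSpace ℝ (Fin (v - 1))}
    (h : IsRegularSimplex v a) : ∑ i, a i = 0 := by
  have hv1 : ((v : ℝ) - 1) ≠ 0 := by
    have : (2 : ℝ) ≤ (v : ℝ) := by exact_mod_cast hv
    linarith
  have hself : ∀ i, ⟪a i, a i⟫ = (1 : ℝ) := fun i => by
    rw [real_inner_self_eq_norm_sq, h.1 i]; norm_num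
  have key : ⟪∑ i, a i, ∑ i, a i⟫ = (0 : ℝ) := by
    rw [inner_sum]
    have hrow : ∀ j : Fin v, ⟪∑ i, a i, a j⟫ = (0 : ℝ) := by
      intro j
      rw [sum_inner, ← Finset.add_sum_erase _ _ (Finset.mem_univ j), hself j]
      have hc : ∑ i ∈ Finset.univ.erase j, ⟪a i, a j⟫
          = ∑ _i ∈ Finset.univ.erase j, (-1 / ((v : ℝ) - 1)) :=
        Finset.sum_congr rfl fun i hi => h.2 i j (Finset.ne_of_mem_erase hi)
      rw [hc, Finset.sum_const, Finset.card_erase_of_mem (Finset.mem_univ j),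
        Finset.card_univ, Fintype.card_fin, nsmul_eq_mul]
      have hcast : ((v - 1 : ℕ) : ℝ) = (v : ℝ) - 1 := by
        have h1 : 1 ≤ v := by omega
        push_cast [h1]
        ring
      rw [hcast]
      field_simp; ring
    simp [hrow]
  exact inner_self_eq_zero.mp key

lemma simplex_span (hv : 2 ≤ v) {a : Fin v → EuclideanSpace ℝ (Fin (v - 1))}
    (h : IsRegularSimplex v a) : Submodule.span ℝ (Set.range a) = ⊤ := by
  have hv1 : ((v : ℝ) - 1) ≠ 0 := by
    have : (2 : ℝ) ≤ (v : ℝ) := by exact_mod_cast hv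
    linarith
  have hv0 : ((v : ℝ)) ≠ 0 := by positivity
  have hself : ∀ i, ⟪a i, a i⟫ = (1 : ℝ) := fun i => by
    rw [real_inner_self_eq_norm_sq, h.1 i]; norm_num
  set ι : Fin (v - 1) → Fin v := Fin.castLE (Nat.sub_le v 1) with hι
  have hιinj : Function.Injective ι := Fin.castLE_injective _
  have hli : LinearIndependent ℝ (fun i => a (ι i)) := by
    rw [Fintype.linearIndependent_iff]
    intro c hc j
    set S : ℝ := ∑ i, c i with hS
    have hcj : ∀ j : Fin (v - 1), c j * (v : ℝ) = S := by
      intro j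
      have h0 : ⟪a (ι j), ∑ i, c i • a (ι i)⟫ = (0 : ℝ) := by rw [hc]; simp
      rw [inner_sum] at h0
      have h1 : ∀ i : Fin (v - 1), ⟪a (ι j), c i • a (ι i)⟫
          = c i * (if i = j then 1 else -1 / ((v : ℝ) - 1)) := by
        intro i
        rw [real_inner_smul_right]
        by_cases hij : i = j
        · simp [hij, hself, h.1]
        · rw [if_neg hij, h.2 _ _ (fun he => hij (hιinj he).symm)]
      rw [Finset.sum_congr rfl fun i _ => h1 i] at h0
      have h2 : ∑ i : Fin (v - 1), c i * (if i = j then 1 else -1 / ((v : ℝ) - 1))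
          = c j * 1 + ∑ i ∈ Finset.univ.erase j, c i * (-1 / ((v : ℝ) - 1)) := by
        rw [← Finset.add_sum_erase _ _ (Finset.mem_univ j), if_pos rfl]
        congr 1
        exact Finset.sum_congr rfl fun i hi => by
          rw [if_neg (Finset.ne_of_mem_erase hi)]
      rw [h2] at h0
      have h3 : ∑ i ∈ Finset.univ.erase j, c i * (-1 / ((v : ℝ) - 1))
          = (S - c j) * (-1 / ((v : ℝ) - 1)) := by
        rw [← Finset.sum_mul]
        congr 1
        rw [hS, ← Finset.add_sum_erase _ _ (Finset.mem_univ j)]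
        ring
      rw [h3] at h0
      field_simp at h0
      linarith
    have hSv : S * (v : ℝ) = ((v - 1 : ℕ) : ℝ) * S := by
      calc S * (v : ℝ) = ∑ i : Fin (v - 1), c i * (v : ℝ) := by rw [← Finset.sum_mul]
        _ = ∑ _i : Fin (v - 1), S := Finset.sum_congr rfl fun i _ => hcj i
        _ = ((v - 1 : ℕ) : ℝ) * S := by
            rw [Finset.sum_const, Finset.card_univ, Fintype.card_fin, nsmul_eq_mul]
    have hcast : ((v - 1 : ℕ) : ℝ) = (v : ℝ) - 1 := by
      have h1 : 1 ≤ v := by omega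
      push_cast [h1]; ring
    have hS0 : S = 0 := by
      rw [hcast] at hSv; nlinarith [hSv]
    have := hcj j
    rw [hS0] at this
    exact by
      have := mul_eq_zero.mp this
      rcases this with h' | h'
      · exact h'
      · exact absurd h' hv0
  have hcard : Fintype.card (Fin (v - 1)) = Module.finrank ℝ (EuclideanSpace ℝ (Fin (v - 1))) := by
    rw [Fintype.card_fin, finrank_euclideanSpace_fin]
  have hspan' := hli.span_eq_top_of_card_eq_finrank' hcard
  apply le_antisymm le_top
  rw [← hspan']
  apply Submodule.span_mono
  rintro _ ⟨i, rfl⟩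
  exact ⟨ι i, rfl⟩

lemma simplex_op (hv : 2 ≤ v) {a : Fin v → EuclideanSpace ℝ (Fin (v - 1))}
    (h : IsRegularSimplex v a) (y : EuclideanSpace ℝ (Fin (v - 1))) :
    ∑ i, ⟪a i, y⟫ • a i = ((v : ℝ) / ((v : ℝ) - 1)) • y := by
  have hv1 : ((v : ℝ) - 1) ≠ 0 := by
    have : (2 : ℝ) ≤ (v : ℝ) := by exact_mod_cast hv
    linarith
  have hself : ∀ i, ⟪a i, a i⟫ = (1 : ℝ) := fun i => by
    rw [real_inner_self_eq_norm_sq, h.1 i]; norm_num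
  have hy : y ∈ Submodule.span ℝ (Set.range a) := by
    rw [simplex_span hv h]; trivial
  induction hy using Submodule.span_induction with
  | mem x hx =>
      obtain ⟨j, rfl⟩ := hx
      have hsum0 := simplex_sum_zero hv h
      have herase : ∑ i ∈ Finset.univ.erase j, a i = -a j := by
        have := Finset.add_sum_erase Finset.univ a (Finset.mem_univ j)
        rw [hsum0] at this
        linear_combination (norm := module) this
      calc ∑ i, ⟪a i, a j⟫ • a i
          = ⟪a j, a j⟫ • a j + ∑ i ∈ Finset.univ.erase j, ⟪a i, a j⟫ • a i :=
            (Finset.add_sum_erase _ _ (Finset.mem_univ j)).symm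
        _ = a j + (-1 / ((v : ℝ) - 1)) • ∑ i ∈ Finset.univ.erase j, a i := by
            rw [hself j, one_smul]
            congr 1
            rw [Finset.smul_sum]
            exact Finset.sum_congr rfl fun i hi => by
              rw [h.2 i j (Finset.ne_of_mem_erase hi)]
        _ = a j + (1 / ((v : ℝ) - 1)) • a j := by rw [herase]; module
        _ = ((v : ℝ) / ((v : ℝ) - 1)) • a j := by
            rw [show ((v : ℝ) / ((v : ℝ) - 1)) = 1 + 1 / ((v : ℝ) - 1) by field_simp; ring]
            module
  | zero => simp
  | add x z hx hz ihx ihz =>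
      simp only [inner_add_right, add_smul, Finset.sum_add_distrib, ihx, ihz, smul_add]
  | smul r x hx ihx =>
      simp only [real_inner_smul_right, mul_smul, ← Finset.smul_sum, ihx]
      rw [smul_comm]

lemma simplex_gram (hv : 2 ≤ v) {a : Fin v → EuclideanSpace ℝ (Fin (v - 1))}
    (h : IsRegularSimplex v a) (x y : EuclideanSpace ℝ (Fin (v - 1))) :
    ∑ i, ⟪x, a i⟫ * ⟪a i, y⟫ = ((v : ℝ) / ((v : ℝ) - 1)) * ⟪x, y⟫ := by
  have h0 := congrArg (fun z => ⟪x, z⟫) (simplex_op hv h y)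
  simp only [inner_sum, real_inner_smul_right] at h0
  rw [← h0]
  exact Finset.sum_congr rfl fun i _ => mul_comm _ _

end Aux

theorem stmt_9 (v w : ℕ) (hv : 2 ≤ v) (hw : 2 ≤ w) (γ ζ : ℝ) (hγζ : γ > ζ)
    (f : Fin w → Fin v → EuclideanSpace ℝ (Fin (v - 1)))
    (hreg : ∀ i, IsRegularSimplex v (f i))
    (hlink : ∀ i j : Fin w, i ≠ j → ∀ a b : Fin v,
      ⟪f i a, f j b⟫ = γ ∨ ⟪f i a, f j b⟫ = ζ) :
    ∃ k lam mu nu : ℝ, mu > nu ∧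
      IsLSSD v w k lam mu nu
        (fun i j => Matrix.of fun a b => if ⟪f i a, f j b⟫ = γ then (1 : ℝ) else 0) := by
  have hv1 : (1 : ℝ) ≤ (v : ℝ) - 1 := by
    have : (2 : ℝ) ≤ (v : ℝ) := by exact_mod_cast hv
    linarith
  have he0 : ((v : ℝ) - 1) ≠ 0 := by linarith
  have hvpos : (0 : ℝ) < (v : ℝ) := by positivity
  have hd : (0 : ℝ) < γ - ζ := sub_pos.mpr hγζ
  have hd0 : γ - ζ ≠ 0 := ne_of_gt hd
  have hdd : (γ - ζ) * (γ - ζ) ≠ 0 := mul_ne_zero hd0 hd0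
  set d : ℝ := γ - ζ with hd_def
  set c : ℝ := (v : ℝ) / ((v : ℝ) - 1) with hc_def
  have hcpos : 0 < c := by
    rw [hc_def]; positivity
  set k0 : ℝ := -((v : ℝ) * ζ) / d with hk0_def
  set s : ℝ := 2 * (d * ζ * k0) + ζ * ζ * (v : ℝ) with hs_def
  set lam : ℝ := (-(c / ((v : ℝ) - 1)) - s) / (d * d) with hlam_def
  set k : ℝ := lam + c * c / (d * d) with hk_def
  set nu : ℝ := (c * ζ - s) / (d * d) with hnu_def
  set mu : ℝ := nu + c / d with hmu_def
  set B : Fin w → Fin w → Matrix (Fin v) (Fin v) ℝ :=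
    fun i j => Matrix.of fun a b => if ⟪f i a, f j b⟫ = γ then (1 : ℝ) else 0 with hB_def
  set Cm : Fin w → Fin w → Matrix (Fin v) (Fin v) ℝ :=
    fun i j => Matrix.of fun a b => ⟪f i a, f j b⟫ with hCm_def
  -- basic facts
  have F1 : ∀ i h j : Fin w, Cm i h * Cm h j = c • Cm i j := by
    intro i h j
    ext a b
    simp only [Matrix.mul_apply, Matrix.smul_apply, hCm_def, Matrix.of_apply, smul_eq_mul]
    exact simplex_gram hv (hreg h) _ _
  have F2 : ∀ i : Fin w, Cm i i = c • (1 : Matrix (Fin v) (Fin v) ℝ)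
      - (1 / ((v : ℝ) - 1)) • _root_.J v := by
    intro i
    ext a b
    simp only [hCm_def, Matrix.of_apply, Matrix.sub_apply, Matrix.smul_apply, Matrix.one_apply,
      _root_.J, smul_eq_mul]
    by_cases hab : a = b
    · subst hab
      rw [if_pos rfl, real_inner_self_eq_norm_sq, (hreg i).1 a]
      rw [hc_def]; field_simp
    · rw [if_neg hab, (hreg i).2 a b hab]
      ring
  have F3 : ∀ i j : Fin w, i ≠ j → Cm i j = d • B i j + ζ • _root_.J v := by
    intro i j hij
    ext a b
    simp only [hCm_def, hB_def, Matrix.of_apply, Matrix.add_apply, Matrix.smul_apply, _root_.J,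
      smul_eq_mul]
    rcases hlink i j hij a b with h | h
    · rw [h, if_pos rfl, hd_def]; ring
    · rw [h, if_neg (by rw [h] at *; exact fun hc' => (ne_of_gt hγζ) hc'.symm)]
      ring
  have rowsum : ∀ i j : Fin w, i ≠ j → ∀ a : Fin v,
      ∑ x : Fin v, B i j a x = k0 := by
    intro i j hij a
    have h0 : ∑ x : Fin v, ⟪f i a, f j x⟫ = (0 : ℝ) := by
      rw [← inner_sum, simplex_sum_zero hv (hreg j), inner_zero_right]
    have h1 : ∑ x : Fin v, ⟪f i a, f j x⟫
        = d * (∑ x : Fin v, B i j a x) + (v : ℝ) * ζ := by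
      rw [Finset.mul_sum]
      have : ∀ x : Fin v, ⟪f i a, f j x⟫ = d * B i j a x + ζ := by
        intro x
        simp only [hB_def, Matrix.of_apply]
        rcases hlink i j hij a x with h | h
        · rw [h, if_pos rfl, hd_def]; ring
        · rw [h, if_neg (fun hc' => (ne_of_gt hγζ) hc'.symm)]; ring
      rw [Finset.sum_congr rfl fun x _ => this x, Finset.sum_add_distrib, Finset.sum_const,
        Finset.card_univ, Fintype.card_fin, nsmul_eq_mul]
    rw [h1] at h0
    rw [hk0_def, eq_div_iff hd0]
    linarith
  have colsum : ∀ i j : Fin w, i ≠ j → ∀ b : Fin v,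
      ∑ x : Fin v, B i j x b = k0 := by
    intro i j hij b
    have h0 : ∑ x : Fin v, ⟪f i x, f j b⟫ = (0 : ℝ) := by
      rw [← sum_inner, simplex_sum_zero hv (hreg i), inner_zero_left]
    have h1 : ∑ x : Fin v, ⟪f i x, f j b⟫
        = d * (∑ x : Fin v, B i j x b) + (v : ℝ) * ζ := by
      rw [Finset.mul_sum]
      have : ∀ x : Fin v, ⟪f i x, f j b⟫ = d * B i j x b + ζ := by
        intro x
        simp only [hB_def, Matrix.of_apply]
        rcases hlink i j hij x b with h | h
        · rw [h, if_pos rfl, hd_def]; ring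
        · rw [h, if_neg (fun hc' => (ne_of_gt hγζ) hc'.symm)]; ring
      rw [Finset.sum_congr rfl fun x _ => this x, Finset.sum_add_distrib, Finset.sum_const,
        Finset.card_univ, Fintype.card_fin, nsmul_eq_mul]
    rw [h1] at h0
    rw [hk0_def, eq_div_iff hd0]
    linarith
  have F4row : ∀ i j : Fin w, i ≠ j → B i j * _root_.J v = k0 • _root_.J v := by
    intro i j hij
    ext a b
    simp only [Matrix.mul_apply, Matrix.smul_apply, _root_.J, Matrix.of_apply, smul_eq_mul, mul_one]
    rw [rowsum i j hij a]
  have F4col : ∀ i j : Fin w, i ≠ j → _root_.J v * B i j = k0 • _root_.J v := by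
    intro i j hij
    ext a b
    simp only [Matrix.mul_apply, Matrix.smul_apply, _root_.J, Matrix.of_apply, smul_eq_mul, one_mul, mul_one]
    rw [colsum i j hij b]
  have F5 : _root_.J v * _root_.J v = (v : ℝ) • _root_.J v := by
    ext a b
    simp only [Matrix.mul_apply, Matrix.smul_apply, _root_.J, Matrix.of_apply, smul_eq_mul, mul_one]
    rw [Finset.sum_const, Finset.card_univ, Fintype.card_fin, nsmul_eq_mul]; ring
  have F6 : ∀ i j : Fin w, i ≠ j → B j i = (B i j)ᵀ := by
    intro i j hij
    ext a b
    simp only [hB_def, Matrix.of_apply, Matrix.transpose_apply]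
    rw [real_inner_comm]
  have expand : ∀ X Y : Matrix (Fin v) (Fin v) ℝ, X * _root_.J v = k0 • _root_.J v → _root_.J v * Y = k0 • _root_.J v →
      (d • X + ζ • _root_.J v) * (d • Y + ζ • _root_.J v) = (d * d) • (X * Y) + s • _root_.J v := by
    intro X Y hX hY
    have h1 : (d • X) * (d • Y) = (d * d) • (X * Y) := by
      rw [smul_mul_assoc, Matrix.mul_smul, smul_smul]
    have h2 : (d • X) * (ζ • _root_.J v) = (d * ζ * k0) • _root_.J v := by
      rw [smul_mul_assoc, Matrix.mul_smul, hX, smul_smul, smul_smul]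
    have h3 : (ζ • _root_.J v) * (d • Y) = (ζ * d * k0) • _root_.J v := by
      rw [smul_mul_assoc, Matrix.mul_smul, hY, smul_smul, smul_smul]
    have h4 : (ζ • _root_.J v) * (ζ • _root_.J v) = (ζ * ζ * (v : ℝ)) • _root_.J v := by
      rw [smul_mul_assoc, Matrix.mul_smul, F5, smul_smul, smul_smul]
    rw [add_mul, mul_add, mul_add, h1, h2, h3, h4, hs_def]
    module
  -- main design equation
  have main : ∀ i j : Fin w, i ≠ j →
      B i j * B j i = (k - lam) • (1 : Matrix (Fin v) (Fin v) ℝ) + lam • _root_.J v := by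
    intro i j hij
    have h1 := F1 i j i
    rw [F3 i j hij, F3 j i hij.symm, F2 i,
      expand _ _ (F4row i j hij) (F4col j i hij.symm)] at h1
    have h2 : (d * d) • (B i j * B j i)
        = (c * c) • (1 : Matrix (Fin v) (Fin v) ℝ) + (-(c / ((v : ℝ) - 1)) - s) • _root_.J v := by
      linear_combination (norm := module) h1
    have e1 : (d * d) * (k - lam) = c * c := by
      rw [hk_def]; field_simp; ring
    have e2 : (d * d) * lam = -(c / ((v : ℝ) - 1)) - s := by
      rw [hlam_def]; field_simp
    have h3 : (d * d) • ((k - lam) • (1 : Matrix (Fin v) (Fin v) ℝ) + lam • _root_.J v)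
        = (c * c) • (1 : Matrix (Fin v) (Fin v) ℝ) + (-(c / ((v : ℝ) - 1)) - s) • _root_.J v := by
      rw [smul_add, smul_smul, smul_smul, e1, e2]
    exact smul_right_injective _ hdd (h2.trans h3.symm)
  have triple : ∀ h i j : Fin w, h ≠ i → h ≠ j → i ≠ j →
      B i h * B h j = nu • _root_.J v + (mu - nu) • B i j := by
    intro h i j hhi hhj hij
    have h1 := F1 i h j
    rw [F3 i h (Ne.symm hhi), F3 h j hhj, F3 i j hij,
      expand _ _ (F4row i h (Ne.symm hhi)) (F4col h j hhj)] at h1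
    -- h1 : (d*d) • (B i h * B h j) + s • _root_.J v = c • (d • B i j + ζ • _root_.J v)
    have h2 : (d * d) • (B i h * B h j)
        = (c * ζ - s) • _root_.J v + (c * d) • B i j := by
      linear_combination (norm := module) h1
    have e1 : (d * d) * nu = c * ζ - s := by
      rw [hnu_def]; field_simp
    have e2 : (d * d) * (mu - nu) = c * d := by
      rw [hmu_def]; field_simp; ring
    have h3 : (d * d) • (nu • _root_.J v + (mu - nu) • B i j)
        = (c * ζ - s) • _root_.J v + (c * d) • B i j := by
      rw [smul_add, smul_smul, smul_smul, e1, e2]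
    exact smul_right_injective _ hdd (h2.trans h3.symm)
  refine ⟨k, lam, mu, nu, ?_, ?_, ?_, ?_, ?_⟩
  · rw [hmu_def]
    have : 0 < c / d := div_pos hcpos hd
    linarith
  · intro i j hij a b
    simp only [hB_def, Matrix.of_apply]
    split
    · right; rfl
    · left; rfl
  · exact F6
  · intro i j hij
    constructor
    · rw [← F6 i j hij]
      exact main i j hij
    · rw [← F6 i j hij]
      exact main j i hij.symm
  · exact triple
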